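/- Let c ≥ 0, β < 0, g > 0, λ > 0, and let J : ℝ → ℝ be continuous, strictly positive, and 2π-periodic. If λ/ρ_c(λ) ≥ (g/(2|β|)) · max_{x∈ℝ} J(x), then every differentiable φ : ℝ → ℝ satisfying φ'(z) = λ h(φ(z)) + λ g R_λ(z) w(φ(z)) for all z ∈ ℝ and φ(0) = π satisfies φ(π) − φ(−π) < 2π. -/

import Mathlib

/-- The Heaviside step function. -/
noncomputable def Heav (z : ℝ) : ℝ := if z < 0 then 0 else 1

/-- The synaptic profile `r_λ(z)`, given by formula (3.10); on `(-π, π) \ {0}` (the only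
values relevant to the integrals below) it equals
`(1/2) e^{-(λz + (c/2)H(z))} [H(z) + (e^{2πλ + c/2} - 1)⁻¹]`. -/
noncomputable def rTheta (c lam z : ℝ) : ℝ :=
  (1 / 2) * Real.exp (-(lam * z + (c / 2) * Heav z)) *
    (Heav z + (Real.exp (2 * Real.pi * lam + c / 2) - 1)⁻¹)

/-- `R_λ(z) = ∫_{-π}^{π} J(z - y) r_λ(y) dy` (formula (3.13)). -/
noncomputable def RTheta (J : ℝ → ℝ) (c lam z : ℝ) : ℝ :=
  ∫ y in (-Real.pi)..Real.pi, J (z - y) * rTheta c lam y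

/-- `h(θ) = 1 - cos θ + β(1 + cos θ)`. -/
noncomputable def hTheta (β θ : ℝ) : ℝ := 1 - Real.cos θ + β * (1 + Real.cos θ)

/-- `w(θ) = 1 + cos θ`. -/
noncomputable def wTheta (θ : ℝ) : ℝ := 1 + Real.cos θ

/-- `ρ_c(λ) = (e^{2πλ} - 1)/(e^{2πλ + c/2} - 1)`. -/
noncomputable def rhoC (c lam : ℝ) : ℝ :=
  (Real.exp (2 * Real.pi * lam) - 1) / (Real.exp (2 * Real.pi * lam + c / 2) - 1)

/-- `f_{c,β}(λ) = (1 - 4βλ²)/(2λ ρ_c(λ))`. -/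
noncomputable def fCB (c β lam : ℝ) : ℝ := (1 - 4 * β * lam ^ 2) / (2 * lam * rhoC c lam)

open MeasureTheory intervalIntegral Set

lemma int_exp_neg (lam a b : ℝ) (hlam : lam ≠ 0) :
    ∫ y in a..b, Real.exp (-(lam * y)) =
      (Real.exp (-(lam * a)) - Real.exp (-(lam * b))) / lam := by
  have h : ∀ y ∈ Set.uIcc a b,
      HasDerivAt (fun y => -(Real.exp (-(lam * y)) / lam)) (Real.exp (-(lam * y))) y := by
    intro y _
    have h1 : HasDerivAt (fun y : ℝ => -(lam * y)) (-lam) y := by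
      simpa using ((hasDerivAt_id y).const_mul lam).fun_neg
    have h3 := (h1.exp.div_const lam).fun_neg
    refine h3.congr_deriv ?_
    field_simp
  rw [intervalIntegral.integral_eq_sub_of_hasDerivAt h
    ((Real.continuous_exp.comp ((continuous_const.mul continuous_id).neg)).intervalIntegrable a b)]
  ring

lemma ae_ne_zero : ∀ᵐ x : ℝ, x ≠ (0:ℝ) := by
  rw [ae_iff]
  have : {x : ℝ | ¬ x ≠ 0} = {0} := by ext x; simp
  rw [this]
  exact Real.volume_singleton

lemma D_pos (c lam : ℝ) (hc : 0 ≤ c) (hlam : 0 < lam) :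
    0 < Real.exp (2 * Real.pi * lam + c / 2) - 1 := by
  have h : (0:ℝ) < 2 * Real.pi * lam + c / 2 := by positivity
  linarith [Real.one_lt_exp_iff.mpr h]

lemma rTheta_nonneg (c lam : ℝ) (hc : 0 ≤ c) (hlam : 0 < lam) (y : ℝ) :
    0 ≤ rTheta c lam y := by
  unfold rTheta Heav
  have hK := D_pos c lam hc hlam
  have : (0:ℝ) < (Real.exp (2 * Real.pi * lam + c / 2) - 1)⁻¹ := inv_pos.mpr hK
  split <;> positivity

-- integrability on the two halves
lemma rTheta_intOn_left (c lam : ℝ) :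
    IntervalIntegrable (rTheta c lam) volume (-Real.pi) 0 := by
  set K := (Real.exp (2 * Real.pi * lam + c / 2) - 1)⁻¹ with hKdef
  have hf : IntervalIntegrable (fun y => (1/2) * Real.exp (-(lam * y)) * K) volume (-Real.pi) 0 :=
    (((continuous_const.mul (Real.continuous_exp.comp
      (continuous_const.mul continuous_id).neg)).mul continuous_const)).intervalIntegrable _ _
  rw [intervalIntegrable_iff] at hf ⊢
  refine hf.congr ?_
  have hmem : ∀ᵐ x ∂(volume.restrict (Set.uIoc (-Real.pi) 0)), x ∈ Set.uIoc (-Real.pi) 0 :=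
    ae_restrict_mem measurableSet_uIoc
  filter_upwards [hmem, ae_restrict_of_ae (ae_ne_zero)] with x hx hne
  have hx0 : x < 0 := by
    rw [Set.uIoc_of_le (neg_nonpos.mpr Real.pi_pos.le)] at hx
    exact lt_of_le_of_ne hx.2 hne
  unfold rTheta Heav
  rw [if_pos hx0]
  rw [hKdef]; ring

lemma rTheta_intOn_right (c lam : ℝ) :
    IntervalIntegrable (rTheta c lam) volume 0 Real.pi := by
  set K := (Real.exp (2 * Real.pi * lam + c / 2) - 1)⁻¹ with hKdef
  have hf : IntervalIntegrable
      (fun y => (1/2) * Real.exp (-(lam * y + c/2)) * (1 + K)) volume 0 Real.pi :=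
    (((continuous_const.mul (Real.continuous_exp.comp
      ((continuous_const.mul continuous_id).add continuous_const).neg)).mul
        continuous_const)).intervalIntegrable _ _
  rw [intervalIntegrable_iff] at hf ⊢
  refine hf.congr ?_
  have hmem : ∀ᵐ x ∂(volume.restrict (Set.uIoc 0 Real.pi)), x ∈ Set.uIoc 0 Real.pi :=
    ae_restrict_mem measurableSet_uIoc
  filter_upwards [hmem] with x hx
  have hx0 : ¬ x < 0 := by
    rw [Set.uIoc_of_le Real.pi_pos.le] at hx
    exact not_lt.mpr hx.1.le
  unfold rTheta Heav
  rw [if_neg hx0]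
  rw [hKdef]; ring

lemma rTheta_integral (c lam : ℝ) (hc : 0 ≤ c) (hlam : 0 < lam) :
    ∫ y in (-Real.pi)..Real.pi, rTheta c lam y = rhoC c lam / (2 * lam) := by
  have hlam' : lam ≠ 0 := ne_of_gt hlam
  set K := (Real.exp (2 * Real.pi * lam + c / 2) - 1)⁻¹ with hKdef
  have hsplit := intervalIntegral.integral_add_adjacent_intervals
    (rTheta_intOn_left c lam) (rTheta_intOn_right c lam)
  rw [← hsplit]
  -- left piece
  have hleft : ∫ y in (-Real.pi)..(0:ℝ), rTheta c lam y
      = (1/2) * K * ((Real.exp (lam * Real.pi) - 1) / lam) := by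
    have hcongr : ∫ y in (-Real.pi)..(0:ℝ), rTheta c lam y
        = ∫ y in (-Real.pi)..(0:ℝ), ((1/2) * K) * Real.exp (-(lam * y)) := by
      apply intervalIntegral.integral_congr_ae
      filter_upwards [ae_ne_zero] with x hne hx
      rw [Set.uIoc_of_le (neg_nonpos.mpr Real.pi_pos.le)] at hx
      have hx0 : x < 0 := lt_of_le_of_ne hx.2 hne
      unfold rTheta Heav
      rw [if_pos hx0]
      rw [hKdef]; ring
    rw [hcongr, intervalIntegral.integral_const_mul, int_exp_neg lam _ _ hlam']
    simp only [mul_zero, neg_zero, Real.exp_zero, mul_neg, neg_neg]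
  -- right piece
  have hright : ∫ y in (0:ℝ)..Real.pi, rTheta c lam y
      = (1/2) * Real.exp (-(c/2)) * (1 + K) * ((1 - Real.exp (-(lam * Real.pi))) / lam) := by
    have hcongr : ∫ y in (0:ℝ)..Real.pi, rTheta c lam y
        = ∫ y in (0:ℝ)..Real.pi,
            ((1/2) * Real.exp (-(c/2)) * (1 + K)) * Real.exp (-(lam * y)) := by
      apply intervalIntegral.integral_congr
      intro x hx
      rw [Set.uIcc_of_le Real.pi_pos.le] at hx
      have hx0 : ¬ x < 0 := not_lt.mpr hx.1
      unfold rTheta Heav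
      rw [if_neg hx0]
      rw [show -(lam * x + c / 2 * 1) = -(c/2) + -(lam*x) by ring, Real.exp_add]
      ring
    rw [hcongr, intervalIntegral.integral_const_mul, int_exp_neg lam _ _ hlam']
    simp only [mul_zero, neg_zero, Real.exp_zero]
  rw [hleft, hright]
  -- algebra
  set A := Real.exp (lam * Real.pi) with hA
  have hApos : 0 < A := Real.exp_pos _
  set E := Real.exp (c / 2) with hE
  have hEpos : 0 < E := Real.exp_pos _
  have h2 : Real.exp (2 * Real.pi * lam) = A * A := by
    rw [hA, ← Real.exp_add]; ring_nf
  have h3 : Real.exp (2 * Real.pi * lam + c / 2) = A * A * E := by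
    rw [hA, hE, ← Real.exp_add, ← Real.exp_add]; ring_nf
  have h4 : Real.exp (-(lam * Real.pi)) = A⁻¹ := by rw [Real.exp_neg]
  have h5 : Real.exp (-(c/2)) = E⁻¹ := by rw [Real.exp_neg]
  have hD : 0 < A * A * E - 1 := by rw [← h3]; exact D_pos c lam hc hlam
  rw [rhoC, hKdef, h2, h3, h4, h5]
  have hD2 : A ^ 2 * E - 1 ≠ 0 := by nlinarith
  field_simp
  ring
lemma tan_half_mono (lam : ℝ) (φ : ℝ → ℝ) (hφ : Differentiable ℝ φ)
    (hle : ∀ z, deriv φ z ≤ lam * (1 - Real.cos (φ z)))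
    {a b : ℝ} (hab : a ≤ b)
    (hr : ∀ t ∈ Set.Icc a b, 0 < φ t ∧ φ t < 2 * Real.pi) :
    Real.tan ((φ b - Real.pi) / 2) - Real.tan ((φ a - Real.pi) / 2) ≤ lam * (b - a) := by
  set F : ℝ → ℝ := fun t => lam * t - Real.tan ((φ t - Real.pi) / 2) with hF
  have hcos : ∀ t ∈ Set.Icc a b, 0 < Real.cos ((φ t - Real.pi) / 2) := by
    intro t ht
    apply Real.cos_pos_of_mem_Ioo
    constructor
    · linarith [(hr t ht).1]
    · linarith [(hr t ht).2]
  have hderiv : ∀ t ∈ Set.Icc a b,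
      HasDerivAt F (lam - 1 / Real.cos ((φ t - Real.pi) / 2) ^ 2 * (deriv φ t / 2)) t := by
    intro t ht
    have h1 : HasDerivAt (fun s => (φ s - Real.pi) / 2) (deriv φ t / 2) t :=
      (((hφ t).hasDerivAt).sub_const _).div_const 2
    have h2 := (Real.hasDerivAt_tan (ne_of_gt (hcos t ht))).comp t h1
    have h3 : HasDerivAt (fun s : ℝ => lam * s) lam t := by
      simpa using (hasDerivAt_id t).const_mul lam
    exact h3.sub h2
  have hnonneg : ∀ t ∈ Set.Icc a b,
      0 ≤ lam - 1 / Real.cos ((φ t - Real.pi) / 2) ^ 2 * (deriv φ t / 2) := by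
    intro t ht
    set θ := (φ t - Real.pi) / 2 with hθ
    have hct : 0 < Real.cos θ := hcos t ht
    have hid : Real.cos (φ t) = 1 - 2 * Real.cos θ ^ 2 := by
      have hφt : φ t = 2 * θ + Real.pi := by rw [hθ]; ring
      rw [hφt, Real.cos_add, Real.cos_pi, Real.sin_pi, Real.cos_two_mul]
      ring
    have hd := hle t
    rw [hid] at hd
    have heq : lam - 1 / Real.cos θ ^ 2 * (deriv φ t / 2)
        = (lam * (2 * Real.cos θ ^ 2) - deriv φ t) / (2 * Real.cos θ ^ 2) := by
      field_simp
    rw [heq]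
    apply div_nonneg
    · nlinarith
    · positivity
  have hcont : ContinuousOn F (Set.Icc a b) := by
    intro t ht
    apply ContinuousWithinAt.sub
    · exact (continuous_const.mul continuous_id).continuousWithinAt
    · apply ContinuousAt.continuousWithinAt
      have hct : ContinuousAt Real.tan ((φ t - Real.pi) / 2) :=
        Real.continuousAt_tan.mpr (ne_of_gt (hcos t ht))
      exact ContinuousAt.comp (g := Real.tan) (f := fun x => (φ x - Real.pi) / 2) hct
        (((hφ.continuous.sub continuous_const).div_const 2).continuousAt)
  have hmono : MonotoneOn F (Set.Icc a b) := by
    apply monotoneOn_of_hasDerivWithinAt_nonneg (convex_Icc a b) hcont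
    · intro t ht
      have ht' : t ∈ Set.Icc a b := interior_subset ht
      exact ((hderiv t ht').hasDerivWithinAt).mono interior_subset
    · intro t ht
      exact hnonneg t (interior_subset ht)
  have := hmono (Set.left_mem_Icc.mpr hab) (Set.right_mem_Icc.mpr hab) hab
  simp only [hF] at this
  linarith

/-- Lemma 5.3 (lemma `ell`): in the excitable case `β < 0`, if
`λ/ρ_c(λ) ≥ (g/(2|β|)) max J`, then the solution of (3.18)-(3.19) satisfies
`φ_λ(π) - φ_λ(-π) < 2π` (i.e. `Ψ(λ) < 1`). -/
theorem rotating_waves_stmt_15 (c β g lam : ℝ) (hc : 0 ≤ c) (hβ : β < 0)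
    (hg : 0 < g) (hlam : 0 < lam)
    (J : ℝ → ℝ) (hJcont : Continuous J) (hJpos : ∀ x : ℝ, 0 < J x)
    (hJper : ∀ x : ℝ, J (x + 2 * Real.pi) = J x)
    (hineq : g / (2 * |β|) * sSup (Set.range J) ≤ lam / rhoC c lam) :
    ∀ φ : ℝ → ℝ, Differentiable ℝ φ →
      (∀ z : ℝ, deriv φ z
        = lam * hTheta β (φ z) + lam * g * RTheta J c lam z * wTheta (φ z)) →
      φ 0 = Real.pi →
      φ Real.pi - φ (-Real.pi) < 2 * Real.pi := by
  intro φ hφ hder hφ0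
  have hπ := Real.pi_pos
  have hφcont := hφ.continuous
  -- the maximum of J
  set M := sSup (Set.range J) with hM
  have hper : Function.Periodic J (2 * Real.pi) := hJper
  have hrange : Set.range J = J '' Set.Icc 0 (0 + 2 * Real.pi) :=
    (hper.image_Icc (by positivity) 0).symm
  have hbdd : BddAbove (Set.range J) := by
    rw [hrange]; exact (isCompact_Icc.image hJcont).bddAbove
  have hMle : ∀ x, J x ≤ M := fun x => le_csSup hbdd ⟨x, rfl⟩
  have hMpos : 0 < M := lt_of_lt_of_le (hJpos 0) (hMle 0)
  have hDpos := D_pos c lam hc hlam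
  have hρpos : 0 < rhoC c lam := by
    apply div_pos _ hDpos
    have h2 : (0:ℝ) < 2 * Real.pi * lam := by positivity
    linarith [Real.one_lt_exp_iff.mpr h2]
  have habs : |β| = -β := abs_of_neg hβ
  rw [habs] at hineq
  -- bound on R
  have hRbound : ∀ z, RTheta J c lam z ≤ M * (rhoC c lam / (2 * lam)) := by
    intro z
    have hrint : IntervalIntegrable (rTheta c lam) volume (-Real.pi) Real.pi :=
      (rTheta_intOn_left c lam).trans (rTheta_intOn_right c lam)
    have h1 : IntervalIntegrable (fun y => J (z - y) * rTheta c lam y)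
        volume (-Real.pi) Real.pi :=
      hrint.continuousOn_mul
        (Continuous.continuousOn (hJcont.comp (continuous_const.sub continuous_id)))
    have h2 : IntervalIntegrable (fun y => M * rTheta c lam y) volume (-Real.pi) Real.pi :=
      hrint.const_mul M
    have h3 : ∀ y ∈ Set.Icc (-Real.pi) Real.pi,
        J (z - y) * rTheta c lam y ≤ M * rTheta c lam y := fun y _ =>
      mul_le_mul_of_nonneg_right (hMle _) (rTheta_nonneg c lam hc hlam y)
    have hmono := intervalIntegral.integral_mono_on (by linarith) h1 h2 h3
    rw [intervalIntegral.integral_const_mul, rTheta_integral c lam hc hlam] at hmono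
    exact hmono
  have hgR : ∀ z, g * RTheta J c lam z ≤ -β := by
    intro z
    have h1 : g * RTheta J c lam z ≤ g * (M * (rhoC c lam / (2 * lam))) :=
      mul_le_mul_of_nonneg_left (hRbound z) hg.le
    refine le_trans h1 ?_
    rw [div_mul_eq_mul_div, div_le_div_iff₀ (by linarith) hρpos] at hineq
    have h2 : g * (M * (rhoC c lam / (2 * lam))) = (g * M * rhoC c lam) / (2 * lam) := by ring
    rw [h2, div_le_iff₀ (by positivity)]
    nlinarith
  -- the differential inequality
  have hle : ∀ z, deriv φ z ≤ lam * (1 - Real.cos (φ z)) := by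
    intro z
    rw [hder z]
    have hkey : 0 ≤ lam * ((-β - g * RTheta J c lam z) * (1 + Real.cos (φ z))) :=
      mul_nonneg hlam.le (mul_nonneg (by linarith [hgR z])
        (by linarith [Real.neg_one_le_cos (φ z)]))
    have heq : lam * hTheta β (φ z) + lam * g * RTheta J c lam z * wTheta (φ z)
        = lam * (1 - Real.cos (φ z))
          - lam * ((-β - g * RTheta J c lam z) * (1 + Real.cos (φ z))) := by
      unfold hTheta wTheta; ring
    rw [heq]; linarith
  -- φ(π) < 2π
  have hφπ : φ Real.pi < 2 * Real.pi := by
    by_contra hcon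
    push_neg at hcon
    set S : Set ℝ := Set.Icc 0 Real.pi ∩ φ ⁻¹' {2 * Real.pi} with hS
    have hSclosed : IsClosed S := isClosed_Icc.inter (isClosed_singleton.preimage hφcont)
    have hSne : S.Nonempty := by
      have h2 : (2 * Real.pi) ∈ Set.Icc (φ 0) (φ Real.pi) := by
        rw [hφ0]; exact ⟨by linarith, hcon⟩
      obtain ⟨t, ht, hft⟩ := intermediate_value_Icc Real.pi_pos.le hφcont.continuousOn h2
      exact ⟨t, ht, hft⟩
    have hSbdd : BddBelow S := bddBelow_Icc.mono Set.inter_subset_left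
    set T := sInf S with hT
    obtain ⟨hTIcc, hTval'⟩ := hSclosed.csInf_mem hSne hSbdd
    have hTval : φ T = 2 * Real.pi := hTval'
    have hT0 : 0 < T := by
      rcases (hTIcc.1).lt_or_eq with h | h
      · exact h
      · exfalso
        have hT0' : T = 0 := hT.trans h.symm
        rw [hT0', hφ0] at hTval; linarith
    have hTπ : T ≤ Real.pi := hTIcc.2
    have hlt : ∀ t ∈ Set.Ico 0 T, φ t < 2 * Real.pi := by
      intro t ht
      by_contra hge
      push_neg at hge
      rcases eq_or_lt_of_le hge with heq | hgt
      · have htS : t ∈ S := ⟨⟨ht.1, le_trans ht.2.le hTπ⟩, heq.symm⟩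
        have := csInf_le hSbdd htS
        linarith [ht.2]
      · have h2 : (2 * Real.pi) ∈ Set.Icc (φ 0) (φ t) := by
          rw [hφ0]; exact ⟨by linarith, hgt.le⟩
        obtain ⟨s, hs, hfs⟩ := intermediate_value_Icc ht.1 hφcont.continuousOn h2
        have hsS : s ∈ S := ⟨⟨hs.1, le_trans hs.2 (le_trans ht.2.le hTπ)⟩, hfs⟩
        have := csInf_le hSbdd hsS
        linarith [hs.2, ht.2]
    obtain ⟨δ₁, hδ₁pos, hδ₁⟩ := Metric.continuousAt_iff.mp (hφcont.continuousAt (x := T))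
      Real.pi Real.pi_pos
    set a := max 0 (T - δ₁ / 2) with ha
    have haT : a < T := max_lt hT0 (by linarith)
    have ha0 : 0 ≤ a := le_max_left _ _
    have hnear : ∀ t, a ≤ t → t < T → Real.pi < φ t := by
      intro t hta htT
      have hd : dist t T < δ₁ := by
        rw [Real.dist_eq, abs_of_nonpos (by linarith)]
        have h5 : T - δ₁ / 2 ≤ a := le_max_right _ _
        linarith
      have h6 := hδ₁ hd
      rw [Real.dist_eq, hTval] at h6
      have h7 := abs_lt.mp h6
      linarith [h7.1]
    set C := Real.tan ((φ a - Real.pi) / 2) + lam * Real.pi with hC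
    have hε₂ : 0 < Real.pi - 2 * Real.arctan C := by
      linarith [Real.arctan_lt_pi_div_two C]
    obtain ⟨δ₂, hδ₂pos, hδ₂⟩ := Metric.continuousAt_iff.mp (hφcont.continuousAt (x := T)) _ hε₂
    set z := max a (T - δ₂ / 2) with hz
    have hza : a ≤ z := le_max_left _ _
    have hzT : z < T := max_lt haT (by linarith)
    have hdz : dist z T < δ₂ := by
      rw [Real.dist_eq, abs_of_nonpos (by linarith)]
      have h5 : T - δ₂ / 2 ≤ z := le_max_right _ _
      linarith
    have hφz : Real.pi + 2 * Real.arctan C < φ z := by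
      have h6 := hδ₂ hdz
      rw [Real.dist_eq, hTval] at h6
      have h7 := abs_lt.mp h6
      linarith [h7.1]
    have hφzlt : φ z < 2 * Real.pi := hlt z ⟨le_trans ha0 hza, hzT⟩
    have hrange2 : ∀ t ∈ Set.Icc a z, 0 < φ t ∧ φ t < 2 * Real.pi := by
      intro t ht
      have h1 : Real.pi < φ t := hnear t ht.1 (lt_of_le_of_lt ht.2 hzT)
      exact ⟨by linarith, hlt t ⟨le_trans ha0 ht.1, lt_of_le_of_lt ht.2 hzT⟩⟩
    have hmono := tan_half_mono lam φ hφ hle hza hrange2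
    have huz : Real.tan ((φ z - Real.pi) / 2) ≤ C := by
      have hz_a : z - a ≤ Real.pi := by linarith
      have h8 : lam * (z - a) ≤ lam * Real.pi := mul_le_mul_of_nonneg_left hz_a hlam.le
      rw [hC]; linarith
    have hθ : (φ z - Real.pi) / 2 ∈ Set.Ioo (-(Real.pi / 2)) (Real.pi / 2) := by
      constructor
      · linarith [Real.neg_pi_div_two_lt_arctan C]
      · linarith
    have hgt2 : C < Real.tan ((φ z - Real.pi) / 2) := by
      have h1 := Real.strictMonoOn_tan (Real.arctan_mem_Ioo C) hθ
        (by linarith : Real.arctan C < (φ z - Real.pi) / 2)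
      rwa [Real.tan_arctan] at h1
    linarith
  -- 0 < φ(-π)
  have hφmπ : 0 < φ (-Real.pi) := by
    by_contra hcon
    push_neg at hcon
    set S : Set ℝ := Set.Icc (-Real.pi) 0 ∩ φ ⁻¹' {0} with hS
    have hSclosed : IsClosed S := isClosed_Icc.inter (isClosed_singleton.preimage hφcont)
    have hSne : S.Nonempty := by
      have h2 : (0:ℝ) ∈ Set.Icc (φ (-Real.pi)) (φ 0) := by
        rw [hφ0]; exact ⟨hcon, hπ.le⟩
      obtain ⟨t, ht, hft⟩ := intermediate_value_Icc (by linarith : -Real.pi ≤ (0:ℝ))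
        hφcont.continuousOn h2
      exact ⟨t, ht, hft⟩
    have hSbdd : BddAbove S := bddAbove_Icc.mono Set.inter_subset_left
    set T := sSup S with hT
    obtain ⟨hTIcc, hTval'⟩ := hSclosed.csSup_mem hSne hSbdd
    have hTval : φ T = 0 := hTval'
    have hT0 : T < 0 := by
      rcases (hTIcc.2).lt_or_eq with h | h
      · exact h
      · exfalso
        have hT0' : T = 0 := hT.trans h
        rw [hT0', hφ0] at hTval; linarith
    have hTmπ : -Real.pi ≤ T := hTIcc.1
    have hgt' : ∀ t ∈ Set.Ioc T 0, 0 < φ t := by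
      intro t ht
      by_contra hge
      push_neg at hge
      rcases eq_or_lt_of_le hge with heq | hgt
      · have htS : t ∈ S := ⟨⟨le_trans hTmπ ht.1.le, ht.2⟩, heq⟩
        have := le_csSup hSbdd htS
        linarith [ht.1]
      · have h2 : (0:ℝ) ∈ Set.Icc (φ t) (φ 0) := by
          rw [hφ0]; exact ⟨hgt.le, hπ.le⟩
        obtain ⟨s, hs, hfs⟩ := intermediate_value_Icc ht.2 hφcont.continuousOn h2
        have hsS : s ∈ S := ⟨⟨le_trans hTmπ (le_trans ht.1.le hs.1), hs.2⟩, hfs⟩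
        have := le_csSup hSbdd hsS
        linarith [hs.1, ht.1]
    obtain ⟨δ₁, hδ₁pos, hδ₁⟩ := Metric.continuousAt_iff.mp (hφcont.continuousAt (x := T))
      Real.pi Real.pi_pos
    set b := min 0 (T + δ₁ / 2) with hb
    have hTb : T < b := lt_min hT0 (by linarith)
    have hb0 : b ≤ 0 := min_le_left _ _
    have hnear : ∀ t, T < t → t ≤ b → φ t < Real.pi := by
      intro t hTt htb
      have hd : dist t T < δ₁ := by
        rw [Real.dist_eq, abs_of_nonneg (by linarith)]
        have h5 : b ≤ T + δ₁ / 2 := min_le_right _ _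
        linarith
      have h6 := hδ₁ hd
      rw [Real.dist_eq, hTval, sub_zero] at h6
      have h7 := abs_lt.mp h6
      linarith [h7.2]
    set C := Real.tan ((φ b - Real.pi) / 2) - lam * Real.pi with hC
    have hε₂ : 0 < Real.pi + 2 * Real.arctan C := by
      linarith [Real.neg_pi_div_two_lt_arctan C]
    obtain ⟨δ₂, hδ₂pos, hδ₂⟩ := Metric.continuousAt_iff.mp (hφcont.continuousAt (x := T)) _ hε₂
    set z := min b (T + δ₂ / 2) with hz
    have hzb : z ≤ b := min_le_left _ _
    have hTz : T < z := lt_min hTb (by linarith)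
    have hdz : dist z T < δ₂ := by
      rw [Real.dist_eq, abs_of_nonneg (by linarith)]
      have h5 : z ≤ T + δ₂ / 2 := min_le_right _ _
      linarith
    have hφz : φ z < Real.pi + 2 * Real.arctan C := by
      have h6 := hδ₂ hdz
      rw [Real.dist_eq, hTval, sub_zero] at h6
      have h7 := abs_lt.mp h6
      linarith [h7.2]
    have hφzpos : 0 < φ z := hgt' z ⟨hTz, le_trans hzb hb0⟩
    have hrange2 : ∀ t ∈ Set.Icc z b, 0 < φ t ∧ φ t < 2 * Real.pi := by
      intro t ht
      have h1 : 0 < φ t := hgt' t ⟨lt_of_lt_of_le hTz ht.1, le_trans ht.2 hb0⟩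
      have h2 : φ t < Real.pi := hnear t (lt_of_lt_of_le hTz ht.1) ht.2
      exact ⟨h1, by linarith⟩
    have hmono := tan_half_mono lam φ hφ hle hzb hrange2
    have huz : C ≤ Real.tan ((φ z - Real.pi) / 2) := by
      have hb_z : b - z ≤ Real.pi := by linarith
      have h8 : lam * (b - z) ≤ lam * Real.pi := mul_le_mul_of_nonneg_left hb_z hlam.le
      rw [hC]; linarith
    have hθ : (φ z - Real.pi) / 2 ∈ Set.Ioo (-(Real.pi / 2)) (Real.pi / 2) := by
      constructor
      · linarith
      · linarith [Real.arctan_lt_pi_div_two C]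
    have hlt2 : Real.tan ((φ z - Real.pi) / 2) < C := by
      have h1 := Real.strictMonoOn_tan hθ (Real.arctan_mem_Ioo C)
        (by linarith : (φ z - Real.pi) / 2 < Real.arctan C)
      rwa [Real.tan_arctan] at h1
    linarith
  linarith
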